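/- With pools A, B, C as above and q_C = 1, if q_A ≥ 5/6 and q_A ≥ q_B, then the overlapping regime T* = (A∪C, B∪C) has welfare at most 7/6 times the welfare of the non-overlapping regime T^1 = (A∪C, B). Concretely, (q_A u_A + q_B u_B + (q_A + (1−q_A)q_B) u_C) ≤ (7/6)(q_A u_A + q_B u_B + q_A u_C). -/

import Mathlib

open Finset

/-- Probability of a health realization `ω` (true = healthy) under independent
healthy-probabilities `q`. -/
noncomputable def healthProb {n : ℕ} (q : Fin n → ℝ) (ω : Fin n → Bool) : ℝ :=
  ∏ i, if ω i then q i else 1 - q i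

/-- Probability that individual `i` lies in at least one negative test of the regime `T`. -/
noncomputable def inNegProb {n B : ℕ} (q : Fin n → ℝ) (T : Fin B → Finset (Fin n))
    (i : Fin n) : ℝ :=
  ∑ ω : Fin n → Bool,
    if ∃ j, i ∈ T j ∧ ∀ k ∈ T j, ω k = true then healthProb q ω else 0

/-- Expected welfare of a (possibly overlapping) testing regime `T`. -/
noncomputable def welfare {n B : ℕ} (q u : Fin n → ℝ) (T : Fin B → Finset (Fin n)) : ℝ :=
  ∑ i, u i * inNegProb q T i

/-- Stand-alone expected welfare of a single pooled test `t`. -/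
noncomputable def testWelfare {n : ℕ} (q u : Fin n → ℝ) (t : Finset (Fin n)) : ℝ :=
  (∏ i ∈ t, q i) * ∑ i ∈ t, u i

/-- Welfare of a non-overlapping testing regime, as a sum of stand-alone test welfares. -/
noncomputable def noWelfare {n B : ℕ} (q u : Fin n → ℝ) (T : Fin B → Finset (Fin n)) : ℝ :=
  ∑ j, testWelfare q u (T j)

/-- Probability that test `T j` is pivotal for individual `i`: `i ∈ T j`, test `T j` is
negative, and every earlier test containing `i` is positive. -/
noncomputable def pivotalProb {n B : ℕ} (q : Fin n → ℝ) (T : Fin B → Finset (Fin n))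
    (i : Fin n) (j : Fin B) : ℝ :=
  ∑ ω : Fin n → Bool,
    if i ∈ T j ∧ (∀ k ∈ T j, ω k = true) ∧
        (∀ j' : Fin B, j' < j → i ∈ T j' → ∃ k ∈ T j', ω k = false)
      then healthProb q ω else 0


/-- With `q_C = 1`: if `q_A ≥ 5/6` and `q_A ≥ q_B`, the overlapping regime
`(A ∪ C, B ∪ C)` has welfare at most `7/6` times that of `(A ∪ C, B)`. -/
theorem stmt12 (qA qB uA uB uC : ℝ)
    (hqA0 : 0 ≤ qA) (hqA1 : qA ≤ 1) (hqB0 : 0 ≤ qB) (hqB1 : qB ≤ 1)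
    (huA : 0 ≤ uA) (huB : 0 ≤ uB) (huC : 0 ≤ uC)
    (h56 : 5 / 6 ≤ qA) (hAB : qB ≤ qA) :
    qA * uA + qB * uB + (qA + (1 - qA) * qB) * uC ≤
      (7 / 6) * (qA * uA + qB * uB + qA * uC) := by
  nlinarith [mul_nonneg hqB0 huC, mul_nonneg huC (mul_nonneg hqA0 hqB0), mul_nonneg huA hqA0, mul_nonneg huB hqB0]
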